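/- Let m ≥ 3 be an odd integer and let Ŵ⁺ be the group with presentation ⟨z, s₀, s₁, s_m | z² = s₀² = s₁² = s_m² = (s₁s_m)^m = 1, (s₀s₁)² = (s₀s_m)² = z, z s_i = s_i z for i ∈ {0,1,m}⟩. Then Ŵ⁺ has exactly 2m + 3 conjugacy classes. -/

import Mathlib

/-- Generators of the double covering of `W = ℤ₂ × D_{2m}`: the central element `z`
and the lifted reflections `s₀`, `s₁`, `s_m`. -/
inductive Gen : Type
  | z | s0 | s1 | sm
deriving DecidableEq

open FreeGroup

/-- Relators of the positive double covering `Ŵ⁺` of `ℤ₂ × D_{2m}` for odd `m`: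
`z² = s₀² = s₁² = s_m² = (s₁s_m)^m = 1`, `(s₀s₁)² = (s₀s_m)² = z`,
and `z` commutes with the generators. -/
def relsOddPos (m : ℕ) : Set (FreeGroup Gen) :=
  { (of Gen.z) ^ 2, (of Gen.s0) ^ 2, (of Gen.s1) ^ 2, (of Gen.sm) ^ 2,
    (of Gen.s1 * of Gen.sm) ^ m,
    (of Gen.s0 * of Gen.s1) ^ 2 * (of Gen.z)⁻¹,
    (of Gen.s0 * of Gen.sm) ^ 2 * (of Gen.z)⁻¹,
    of Gen.z * of Gen.s0 * (of Gen.z)⁻¹ * (of Gen.s0)⁻¹,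
    of Gen.z * of Gen.s1 * (of Gen.z)⁻¹ * (of Gen.s1)⁻¹,
    of Gen.z * of Gen.sm * (of Gen.z)⁻¹ * (of Gen.sm)⁻¹ }


@[ext] structure GM (m : ℕ) where
  a : ZMod 2
  b : ZMod 2
  c : ZMod m
  e : ZMod 2

namespace GM

variable {m : ℕ}

def nu (e : ZMod 2) (c : ZMod m) : ZMod m := if e = 1 then -c else c

lemma zmod2_cases (e : ZMod 2) : e = 0 ∨ e = 1 := by revert e; decide

lemma nu_zero (e : ZMod 2) : nu e (0 : ZMod m) = 0 := by
  unfold nu; split <;> simp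

lemma nu_add (e : ZMod 2) (x y : ZMod m) : nu e (x + y) = nu e x + nu e y := by
  unfold nu; split <;> ring

lemma nu_nu (e e' : ZMod 2) (x : ZMod m) : nu e (nu e' x) = nu (e + e') x := by
  rcases zmod2_cases e with h | h <;> rcases zmod2_cases e' with h' | h' <;>
    subst h <;> subst h' <;> simp [nu]

@[simp] lemma nu_zero' (c : ZMod m) : nu (0 : ZMod 2) c = c := by simp [nu]

@[simp] lemma nu_one (c : ZMod m) : nu (1 : ZMod 2) c = -c := by simp [nu]

lemma two_zero : (1 + 1 : ZMod 2) = 0 := by decide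

lemma nu_neg (e : ZMod 2) (x : ZMod m) : nu e (-x) = -(nu e x) := by
  unfold nu; split <;> ring

instance : Mul (GM m) := ⟨fun x y => ⟨x.a + y.a + x.e * y.b, x.b + y.b, x.c + nu x.e y.c, x.e + y.e⟩⟩
instance : One (GM m) := ⟨⟨0, 0, 0, 0⟩⟩
instance : Inv (GM m) := ⟨fun x => ⟨x.a + x.e * x.b, x.b, -(nu x.e x.c), x.e⟩⟩

lemma mul_def (x y : GM m) :
    x * y = ⟨x.a + y.a + x.e * y.b, x.b + y.b, x.c + nu x.e y.c, x.e + y.e⟩ := rfl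
lemma one_def : (1 : GM m) = ⟨0, 0, 0, 0⟩ := rfl
@[simp] lemma one_a : (1 : GM m).a = 0 := rfl
@[simp] lemma one_b : (1 : GM m).b = 0 := rfl
@[simp] lemma one_c : (1 : GM m).c = 0 := rfl
@[simp] lemma one_e : (1 : GM m).e = 0 := rfl
lemma inv_def (x : GM m) : x⁻¹ = ⟨x.a + x.e * x.b, x.b, -(nu x.e x.c), x.e⟩ := rfl

instance : Group (GM m) where
  mul_assoc x y z := by
    ext <;> simp only [mul_def, nu_add, nu_nu] <;> ring
  one_mul x := by ext <;> simp [mul_def, one_def]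
  mul_one x := by ext <;> simp [mul_def, one_def, nu_zero]
  inv_mul_cancel x := by
    ext
    · simp only [mul_def, inv_def, one_def]
      rcases zmod2_cases x.a with h | h <;> rcases zmod2_cases x.b with h' | h' <;>
        rcases zmod2_cases x.e with h'' | h'' <;> simp only [h, h', h''] <;> decide
    · simp only [mul_def, inv_def, one_def]
      rcases zmod2_cases x.b with h | h <;> simp only [h] <;> decide
    · simp only [mul_def, inv_def, one_def]; ring
    · simp only [mul_def, inv_def, one_def]
      rcases zmod2_cases x.e with h | h <;> simp only [h] <;> decide

lemma conj_eq (g x : GM m) :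
    g * x * g⁻¹ = ⟨x.a + g.e * x.b + x.e * g.b, x.b,
      (if x.e = 0 then nu g.e x.c else g.c + g.c + nu g.e x.c), x.e⟩ := by
  ext
  · simp only [mul_def, inv_def]
    rcases zmod2_cases g.a with h | h <;> rcases zmod2_cases g.b with h1 | h1 <;>
      rcases zmod2_cases g.e with h2 | h2 <;> rcases zmod2_cases x.a with h3 | h3 <;>
      rcases zmod2_cases x.b with h4 | h4 <;> rcases zmod2_cases x.e with h5 | h5 <;>
      simp only [h, h1, h2, h3, h4, h5] <;> decide
  · simp only [mul_def, inv_def]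
    rcases zmod2_cases g.b with h | h <;> rcases zmod2_cases x.b with h1 | h1 <;>
      simp only [h, h1] <;> decide
  · simp only [mul_def, inv_def]
    rcases zmod2_cases g.e with h | h <;> rcases zmod2_cases x.e with h' | h' <;>
      simp only [h, h', two_zero, nu_zero', nu_one, nu_neg] <;> norm_num <;> ring
  · simp only [mul_def, inv_def]
    rcases zmod2_cases g.e with h | h <;> rcases zmod2_cases x.e with h1 | h1 <;>
      simp only [h, h1] <;> decide

/-! ### Conjugacy invariant -/

def Inv' (m : ℕ) : Type := (ZMod 2) ⊕ (ZMod 2 × Fin (m / 2 + 1)) ⊕ (ZMod m)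

variable [NeZero m]

def canon (c : ZMod m) : Fin (m / 2 + 1) :=
  ⟨if c.val ≤ m / 2 then c.val else m - c.val, by
    have := c.val_lt; split <;> omega⟩

lemma canon_neg (hodd : Odd m) (c : ZMod m) : canon (-c) = canon c := by
  rcases eq_or_ne c 0 with h | h
  · simp [h]
  · have h1 := c.val_lt
    have h2 : c.val ≠ 0 := fun hh => h (by rwa [← ZMod.val_eq_zero])
    have h3 : (-c).val = m - c.val := by rw [ZMod.neg_val, if_neg h]
    have h4 : m % 2 = 1 := Nat.odd_iff.1 hodd
    unfold canon
    apply Fin.ext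
    simp only [h3]
    split <;> split <;> omega

def F (x : GM m) : Inv' m :=
  if x.e = 1 then .inl x.b
  else if x.b = 1 then .inr (.inr (nu x.a x.c))
  else .inr (.inl (x.a, canon x.c))

def sec : Inv' m → GM m
  | .inl b => ⟨0, b, 0, 1⟩
  | .inr (.inl (a, i)) => ⟨a, 0, (i.val : ZMod m), 0⟩
  | .inr (.inr lam) => ⟨0, 1, lam, 0⟩

lemma F_sec (i : Inv' m) : F (sec i) = i := by
  rcases i with b | ⟨a, j⟩ | lam
  · simp [F, sec]; rfl
  · have hm2 : m / 2 < m := by have := Nat.pos_of_ne_zero (NeZero.ne m); omega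
    have hj : j.val < m := lt_of_lt_of_le j.isLt (by omega)
    have hv : ((j.val : ZMod m)).val = j.val := ZMod.val_cast_of_lt hj
    have hcanon : canon ((j.val : ZMod m)) = j := by
      unfold canon
      apply Fin.ext
      simp only [hv]
      rw [if_pos (Nat.lt_succ_iff.1 j.isLt)]
    simp +decide [F, sec, hcanon]; rfl
  · simp +decide [F, sec]; rfl

lemma F_conj (hodd : Odd m) (g x : GM m) : F (g * x * g⁻¹) = F x := by
  rw [conj_eq]
  rcases zmod2_cases x.e with he | he
  · -- e = 0
    rcases zmod2_cases g.e with hE | hE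
    · simp [F, he, hE]
    · rcases zmod2_cases x.b with hb | hb
      · simp +decide [F, he, hE, hb, canon_neg hodd]; rfl
      · rcases zmod2_cases x.a with ha | ha <;>
          simp +decide [F, he, hE, hb, ha, two_zero] <;> rfl
  · simp +decide [F, he]; rfl

lemma two_isUnit (hodd : Odd m) : IsUnit (2 : ZMod m) := by
  have := (ZMod.isUnit_iff_coprime 2 m).2 (Nat.coprime_two_left.2 hodd)
  simpa using this

lemma exists_half (hodd : Odd m) (y : ZMod m) : ∃ C : ZMod m, C + C = y := by
  obtain ⟨u, hu⟩ := two_isUnit (m := m) hodd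
  refine ⟨(u⁻¹ : (ZMod m)ˣ) * y, ?_⟩
  have h2 : (2 : ZMod m) * ((u⁻¹ : (ZMod m)ˣ) * y) = y := by
    rw [← hu, ← mul_assoc]
    simp
  rw [← two_mul, h2]

lemma isConj_sec_F (hodd : Odd m) (x : GM m) : IsConj (sec (F x)) x := by
  apply IsConj.symm
  rw [isConj_iff]
  rcases zmod2_cases x.e with he | he
  · rcases zmod2_cases x.b with hb | hb
    · -- e = 0, b = 0
      by_cases hc : x.c.val ≤ m / 2
      · refine ⟨1, ?_⟩
        rw [conj_eq]
        have hcast : ((if x.c.val ≤ m / 2 then x.c.val else m - x.c.val : ℕ) : ZMod m)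
            = x.c := by
          rw [if_pos hc]; exact ZMod.natCast_rightInverse x.c
        simp +decide [F, sec, he, hb, canon, hcast]
      · refine ⟨⟨0,0,0,1⟩, ?_⟩
        rw [conj_eq]
        have h1 := x.c.val_lt
        have hcast : ((if x.c.val ≤ m / 2 then x.c.val else m - x.c.val : ℕ) : ZMod m)
            = -x.c := by
          rw [if_neg hc]
          push_cast [Nat.cast_sub (le_of_lt h1)]
          simp [ZMod.natCast_rightInverse x.c]
        simp +decide [F, sec, he, hb, canon, hcast]
      -- e = 0, b = 1
    · rcases zmod2_cases x.a with ha | ha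
      · refine ⟨1, ?_⟩
        rw [conj_eq]
        simp +decide [F, sec, he, hb, ha]
      · refine ⟨⟨0,0,0,1⟩, ?_⟩
        rw [conj_eq]
        simp +decide [F, sec, he, hb, ha, two_zero]
  · -- e = 1
    obtain ⟨C, hC⟩ := exists_half (m := m) hodd (-x.c)
    refine ⟨⟨0, x.a, C, 0⟩, ?_⟩
    rw [conj_eq]
    have hcc : C + C + x.c = 0 := by rw [hC]; ring
    rcases zmod2_cases x.a with ha | ha <;>
      simp +decide [F, sec, he, ha, two_zero, hcc]

def classEquiv (hodd : Odd m) : ConjClasses (GM m) ≃ Inv' m where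
  toFun := Quotient.lift F (fun x y (h : IsConj x y) => by
    obtain ⟨g, hg⟩ := isConj_iff.1 h
    rw [← hg, F_conj hodd])
  invFun i := ConjClasses.mk (sec i)
  left_inv := by
    rintro ⟨x⟩
    exact ConjClasses.mk_eq_mk_iff_isConj.2 (isConj_sec_F hodd x)
  right_inv := F_sec

lemma card_conjClasses (hodd : Odd m) :
    Nat.card (ConjClasses (GM m)) = 2 * m + 3 := by
  rw [Nat.card_congr (classEquiv hodd)]
  have : Nat.card (Inv' m) = 2 + (2 * (m / 2 + 1) + m) := by
    have hfin : Nat.card (Fin (m / 2 + 1)) = m / 2 + 1 := by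
      rw [Nat.card_eq_fintype_card, Fintype.card_fin]
    unfold Inv'
    rw [Nat.card_sum, Nat.card_sum, Nat.card_prod, Nat.card_zmod, Nat.card_zmod, hfin]
  rw [this]
  have := Nat.odd_iff.1 hodd
  omega

end GM
namespace WposOdd

variable {m : ℕ}

/-- images of generators in `GM m` -/
def fg : Gen → GM m
  | .z => ⟨1, 0, 0, 0⟩
  | .s0 => ⟨0, 1, 0, 0⟩
  | .s1 => ⟨0, 0, 0, 1⟩
  | .sm => ⟨0, 0, -1, 1⟩

lemma rG_pow (k : ℕ) : (⟨0, 0, 1, 0⟩ : GM m) ^ k = ⟨0, 0, (k : ZMod m), 0⟩ := by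
  induction k with
  | zero => simp [GM.one_def]
  | succ n ih =>
      rw [pow_succ, ih]
      ext <;> simp [GM.mul_def] <;> push_cast <;> ring

lemma zG_pow (k : ℕ) : (⟨1, 0, 0, 0⟩ : GM m) ^ k = ⟨(k : ZMod 2), 0, 0, 0⟩ := by
  induction k with
  | zero => simp [GM.one_def]
  | succ n ih =>
      rw [pow_succ, ih]
      ext <;> simp [GM.mul_def] <;> push_cast <;> ring

lemma tG_pow (k : ℕ) : (⟨0, 1, 0, 0⟩ : GM m) ^ k = ⟨0, (k : ZMod 2), 0, 0⟩ := by
  induction k with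
  | zero => simp [GM.one_def]
  | succ n ih =>
      rw [pow_succ, ih]
      ext <;> simp [GM.mul_def] <;> push_cast <;> ring

lemma sG_pow (k : ℕ) : (⟨0, 0, 0, 1⟩ : GM m) ^ k = ⟨0, 0, 0, (k : ZMod 2)⟩ := by
  induction k with
  | zero => simp [GM.one_def]
  | succ n ih =>
      rw [pow_succ, ih]
      ext <;> simp [GM.mul_def, GM.nu_zero] <;> push_cast <;> ring

lemma fg_rels (m : ℕ) : ∀ r ∈ relsOddPos m, FreeGroup.lift (fg (m := m)) r = 1 := by
  intro r hr
  simp only [relsOddPos, Set.mem_insert_iff, Set.mem_singleton_iff] at hr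
  rcases hr with rfl | rfl | rfl | rfl | rfl | rfl | rfl | rfl | rfl | rfl <;>
    simp only [_root_.map_mul, _root_.map_pow, _root_.map_inv, FreeGroup.lift_apply_of]
  · rw [pow_two]; ext <;> simp +decide [fg, GM.mul_def, GM.one_def]
  · rw [pow_two]; ext <;> simp +decide [fg, GM.mul_def, GM.one_def]
  · rw [pow_two]; ext <;> simp +decide [fg, GM.mul_def, GM.one_def]
  · rw [pow_two]; ext <;> simp +decide [fg, GM.mul_def, GM.one_def]
  · have h1 : fg Gen.s1 * fg Gen.sm = (⟨0, 0, 1, 0⟩ : GM m) := by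
      ext <;> simp +decide [fg, GM.mul_def]
    rw [h1, rG_pow]
    ext <;> simp [GM.one_def, ZMod.natCast_self]
  · rw [pow_two]; ext <;> simp +decide [fg, GM.mul_def, GM.inv_def, GM.one_def, GM.nu_zero, GM.two_zero]
  · rw [pow_two]; ext <;> simp +decide [fg, GM.mul_def, GM.inv_def, GM.one_def, GM.nu_zero, GM.two_zero]
  · ext <;> simp +decide [fg, GM.mul_def, GM.inv_def, GM.one_def]
  · ext <;> simp +decide [fg, GM.mul_def, GM.inv_def, GM.one_def]
  · ext <;> simp +decide [fg, GM.mul_def, GM.inv_def, GM.one_def]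

/-- the canonical hom from the presented group to `GM m` -/
def pi (m : ℕ) : PresentedGroup (relsOddPos m) →* GM m :=
  PresentedGroup.toGroup (fg_rels m)

/-! generators in the presented group -/

def Z : PresentedGroup (relsOddPos m) := PresentedGroup.of Gen.z
def T : PresentedGroup (relsOddPos m) := PresentedGroup.of Gen.s0
def S : PresentedGroup (relsOddPos m) := PresentedGroup.of Gen.s1
def M : PresentedGroup (relsOddPos m) := PresentedGroup.of Gen.sm
def R : PresentedGroup (relsOddPos m) := S * M

lemma rel_one {r : FreeGroup Gen} (hr : r ∈ relsOddPos m) :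
    PresentedGroup.mk (relsOddPos m) r = 1 :=
  (QuotientGroup.eq_one_iff r).2 (Subgroup.subset_normalClosure hr)

lemma hZ2 : (Z : PresentedGroup (relsOddPos m)) * Z = 1 := by
  have h := rel_one (m := m) (r := (of Gen.z) ^ 2) (by simp [relsOddPos])
  simpa [_root_.map_pow, pow_two, Z, PresentedGroup.of] using h

lemma hT2 : (T : PresentedGroup (relsOddPos m)) * T = 1 := by
  have h := rel_one (m := m) (r := (of Gen.s0) ^ 2) (by simp [relsOddPos])
  simpa [_root_.map_pow, pow_two, T, PresentedGroup.of] using h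

lemma hS2 : (S : PresentedGroup (relsOddPos m)) * S = 1 := by
  have h := rel_one (m := m) (r := (of Gen.s1) ^ 2) (by simp [relsOddPos])
  simpa [_root_.map_pow, pow_two, S, PresentedGroup.of] using h

lemma hM2 : (M : PresentedGroup (relsOddPos m)) * M = 1 := by
  have h := rel_one (m := m) (r := (of Gen.sm) ^ 2) (by simp [relsOddPos])
  simpa [_root_.map_pow, pow_two, M, PresentedGroup.of] using h

lemma hRm : (R : PresentedGroup (relsOddPos m)) ^ m = 1 := by
  have h := rel_one (m := m) (r := (of Gen.s1 * of Gen.sm) ^ m) (by simp [relsOddPos])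
  simpa [_root_.map_pow, _root_.map_mul, R, S, M, PresentedGroup.of] using h

lemma hTS : (T : PresentedGroup (relsOddPos m)) * S * (T * S) = Z := by
  have h := rel_one (m := m) (r := (of Gen.s0 * of Gen.s1) ^ 2 * (of Gen.z)⁻¹)
    (by simp [relsOddPos])
  rw [_root_.map_mul, _root_.map_pow, _root_.map_mul, _root_.map_inv, mul_inv_eq_one] at h
  simpa [pow_two, mul_assoc, T, S, Z, PresentedGroup.of] using h

lemma hTM : (T : PresentedGroup (relsOddPos m)) * M * (T * M) = Z := by
  have h := rel_one (m := m) (r := (of Gen.s0 * of Gen.sm) ^ 2 * (of Gen.z)⁻¹)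
    (by simp [relsOddPos])
  rw [_root_.map_mul, _root_.map_pow, _root_.map_mul, _root_.map_inv, mul_inv_eq_one] at h
  simpa [pow_two, mul_assoc, T, M, Z, PresentedGroup.of] using h

lemma comm_of_rel {x : PresentedGroup (relsOddPos m)} {g : Gen}
    (h : PresentedGroup.mk (relsOddPos m)
        (of Gen.z * of g * (of Gen.z)⁻¹ * (of g)⁻¹) = 1)
    (hx : PresentedGroup.of g = x) : Commute (Z (m := m)) x := by
  rw [_root_.map_mul, _root_.map_mul, _root_.map_mul, _root_.map_inv, _root_.map_inv] at h
  have h2 : (Z : PresentedGroup (relsOddPos m)) * x * Z⁻¹ * x⁻¹ = 1 := by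
    rw [← hx]; exact h
  have h3 : (Z : PresentedGroup (relsOddPos m)) * x * Z⁻¹ = x := by
    rwa [mul_inv_eq_one] at h2
  unfold Commute SemiconjBy
  calc Z * x = Z * x * Z⁻¹ * Z := by group
    _ = x * Z := by rw [h3]

lemma cZT : Commute (Z (m := m)) T :=
  comm_of_rel (rel_one (by simp [relsOddPos])) rfl

lemma cZS : Commute (Z (m := m)) S :=
  comm_of_rel (rel_one (by simp [relsOddPos])) rfl

lemma cZM : Commute (Z (m := m)) M :=
  comm_of_rel (rel_one (by simp [relsOddPos])) rfl

lemma cZR : Commute (Z (m := m)) R := (cZS).mul_right cZM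

lemma T_inv : (T : PresentedGroup (relsOddPos m))⁻¹ = T := by
  rw [← mul_eq_one_iff_inv_eq]; exact hT2

lemma S_inv : (S : PresentedGroup (relsOddPos m))⁻¹ = S := by
  rw [← mul_eq_one_iff_inv_eq]; exact hS2

lemma M_inv : (M : PresentedGroup (relsOddPos m))⁻¹ = M := by
  rw [← mul_eq_one_iff_inv_eq]; exact hM2

lemma Z_inv : (Z : PresentedGroup (relsOddPos m))⁻¹ = Z := by
  rw [← mul_eq_one_iff_inv_eq]; exact hZ2

lemma hTS' : (T : PresentedGroup (relsOddPos m)) * S * T * S = Z := by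
  have h := hTS (m := m); rw [← h]; group

lemma hTM' : (T : PresentedGroup (relsOddPos m)) * M * T * M = Z := by
  have h := hTM (m := m); rw [← h]; group

/-- `S * T = Z * (T * S)` -/
lemma sST : (S : PresentedGroup (relsOddPos m)) * T = Z * (T * S) := by
  have h2 : (S : PresentedGroup (relsOddPos m)) * T = T⁻¹ * (T * S * T * S) * S⁻¹ := by
    group
  rw [hTS', T_inv, S_inv] at h2
  calc (S : PresentedGroup (relsOddPos m)) * T = T * Z * S := h2
    _ = Z * T * S := by rw [cZT.eq]
    _ = Z * (T * S) := by rw [mul_assoc]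

lemma sMT : (M : PresentedGroup (relsOddPos m)) * T = Z * (T * M) := by
  have h2 : (M : PresentedGroup (relsOddPos m)) * T = T⁻¹ * (T * M * T * M) * M⁻¹ := by
    group
  rw [hTM', T_inv, M_inv] at h2
  calc (M : PresentedGroup (relsOddPos m)) * T = T * Z * M := h2
    _ = Z * T * M := by rw [cZT.eq]
    _ = Z * (T * M) := by rw [mul_assoc]

lemma tTS : (T : PresentedGroup (relsOddPos m)) * S = Z * (S * T) := by
  have h2 : (T : PresentedGroup (relsOddPos m)) * S = (T * S * T * S) * S⁻¹ * T⁻¹ := by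
    group
  rw [hTS', S_inv, T_inv] at h2
  calc (T : PresentedGroup (relsOddPos m)) * S = Z * S * T := h2
    _ = Z * (S * T) := by rw [mul_assoc]

lemma tTM : (T : PresentedGroup (relsOddPos m)) * M = Z * (M * T) := by
  have h2 : (T : PresentedGroup (relsOddPos m)) * M = (T * M * T * M) * M⁻¹ * T⁻¹ := by
    group
  rw [hTM', M_inv, T_inv] at h2
  calc (T : PresentedGroup (relsOddPos m)) * M = Z * M * T := h2
    _ = Z * (M * T) := by rw [mul_assoc]

lemma cTR : Commute (T (m := m)) R := by
  unfold Commute SemiconjBy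
  calc (T : PresentedGroup (relsOddPos m)) * R = (T * S) * M := by rw [R, mul_assoc]
    _ = (Z * (S * T)) * M := by rw [tTS]
    _ = Z * (S * (T * M)) := by group
    _ = Z * (S * (Z * (M * T))) := by rw [tTM]
    _ = Z * (Z * (S * (M * T))) := by
        congr 1
        calc (S : PresentedGroup (relsOddPos m)) * (Z * (M * T))
            = (S * Z) * (M * T) := by rw [mul_assoc]
          _ = (Z * S) * (M * T) := by rw [cZS.eq]
          _ = Z * (S * (M * T)) := by rw [mul_assoc]
    _ = (Z * Z) * (S * (M * T)) := by rw [mul_assoc]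
    _ = S * (M * T) := by rw [hZ2, one_mul]
    _ = R * T := by rw [R]; group

lemma sSR : SemiconjBy (S (m := m)) R R⁻¹ := by
  unfold SemiconjBy
  calc (S : PresentedGroup (relsOddPos m)) * R = S * (S * M) := by rw [R]
    _ = S * S * M := by rw [mul_assoc]
    _ = M := by rw [hS2, one_mul]
    _ = M⁻¹ := M_inv.symm
    _ = R⁻¹ * S := by rw [R, mul_inv_rev]; group

/-! ### normal forms -/

section NF

variable {m : ℕ}

local notation "P" => PresentedGroup (relsOddPos m)

def Zp (a : ZMod 2) : P := Z ^ a.val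
def Tp (b : ZMod 2) : P := T ^ b.val
def Sp (e : ZMod 2) : P := S ^ e.val
def Rp (c : ZMod m) : P := R ^ c.val

lemma Zsq : (Z : P) ^ 2 = 1 := by rw [pow_two]; exact hZ2
lemma Tsq : (T : P) ^ 2 = 1 := by rw [pow_two]; exact hT2
lemma Ssq : (S : P) ^ 2 = 1 := by rw [pow_two]; exact hS2

lemma Zp_add (a b : ZMod 2) : Zp (m := m) (a + b) = Zp a * Zp b := by
  unfold Zp
  rw [ZMod.val_add, ← pow_eq_pow_mod _ Zsq, pow_add]

lemma Tp_add (a b : ZMod 2) : Tp (m := m) (a + b) = Tp a * Tp b := by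
  unfold Tp
  rw [ZMod.val_add, ← pow_eq_pow_mod _ Tsq, pow_add]

lemma Sp_add (a b : ZMod 2) : Sp (m := m) (a + b) = Sp a * Sp b := by
  unfold Sp
  rw [ZMod.val_add, ← pow_eq_pow_mod _ Ssq, pow_add]

lemma Rp_add [NeZero m] (a b : ZMod m) : Rp (m := m) (a + b) = Rp a * Rp b := by
  unfold Rp
  rw [ZMod.val_add, ← pow_eq_pow_mod _ hRm, pow_add]

lemma Zp_zero : Zp (m := m) 0 = 1 := by unfold Zp; norm_num
lemma Tp_zero : Tp (m := m) 0 = 1 := by unfold Tp; norm_num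
lemma Sp_zero : Sp (m := m) 0 = 1 := by unfold Sp; norm_num
lemma Rp_zero [NeZero m] : Rp (m := m) 0 = 1 := by unfold Rp; rw [ZMod.val_zero, pow_zero]
lemma Zp_one : Zp (m := m) 1 = Z := by unfold Zp; rw [show (1 : ZMod 2).val = 1 from rfl, pow_one]
lemma Tp_one : Tp (m := m) 1 = T := by unfold Tp; rw [show (1 : ZMod 2).val = 1 from rfl, pow_one]
lemma Sp_one : Sp (m := m) 1 = S := by unfold Sp; rw [show (1 : ZMod 2).val = 1 from rfl, pow_one]

lemma Rp_one (hm : 3 ≤ m) [NeZero m] : Rp (m := m) 1 = R := by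
  haveI : Fact (1 < m) := ⟨by omega⟩
  unfold Rp
  rw [ZMod.val_one, pow_one]

/-- exchange helper -/
lemma exch {G : Type*} [Group G] {a b : G} (h : Commute a b) (y : G) :
    b * (a * y) = a * (b * y) := by
  rw [← mul_assoc, ← h.eq, mul_assoc]

-- commutation facts
lemma cZSp (e : ZMod 2) : Commute (Z : P) (Sp e) := cZS.pow_right _
lemma cZTp (b : ZMod 2) : Commute (Z : P) (Tp b) := cZT.pow_right _
lemma cZRp (c : ZMod m) : Commute (Z : P) (Rp c) := cZR.pow_right _
lemma cZpSp (a e : ZMod 2) : Commute (Zp (m := m) a) (Sp e) := (cZSp e).pow_left _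
lemma cZpTp (a b : ZMod 2) : Commute (Zp (m := m) a) (Tp b) := (cZTp b).pow_left _
lemma cZpRp (a : ZMod 2) (c : ZMod m) : Commute (Zp (m := m) a) (Rp c) := (cZRp c).pow_left _
lemma cTRp (c : ZMod m) : Commute (T : P) (Rp c) := cTR.pow_right _

-- move lemmas
lemma zS (e : ZMod 2) : Sp (m := m) e * Z = Z * Sp e := ((cZSp e).symm).eq
lemma zS' (e : ZMod 2) (y : P) : Sp e * (Z * y) = Z * (Sp e * y) := exch (cZSp e) y
lemma zR (c : ZMod m) : Rp c * Z = Z * Rp c := ((cZRp c).symm).eq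
lemma zR' (c : ZMod m) (y : P) : Rp c * (Z * y) = Z * (Rp c * y) := exch (cZRp c) y
lemma zT (b : ZMod 2) : Tp (m := m) b * Z = Z * Tp b := ((cZTp b).symm).eq
lemma zT' (b : ZMod 2) (y : P) : Tp b * (Z * y) = Z * (Tp b * y) := exch (cZTp b) y
lemma zZ (a : ZMod 2) : Zp (m := m) a * Z = Zp (a + 1) := by rw [Zp_add, Zp_one]
lemma zZ' (a : ZMod 2) (y : P) : Zp a * (Z * y) = Zp (a + 1) * y := by
  rw [← mul_assoc, zZ]

lemma ZpS (c : ZMod m) (a : ZMod 2) (y : P) : Rp c * (Zp a * y) = Zp a * (Rp c * y) :=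
  exch (cZpRp a c) y
lemma ZpT (b a : ZMod 2) (y : P) : Tp (m := m) b * (Zp a * y) = Zp a * (Tp b * y) :=
  exch (cZpTp a b) y
lemma ZpZ (a a' : ZMod 2) (y : P) : Zp (m := m) a * (Zp a' * y) = Zp (a + a') * y := by
  rw [← mul_assoc, ← Zp_add]

lemma tR (c : ZMod m) : Rp c * T = T * Rp c := ((cTRp c).symm).eq
lemma tR' (c : ZMod m) (y : P) : Rp c * (T * y) = T * (Rp c * y) := exch (cTRp c) y

lemma tS (e : ZMod 2) : Sp (m := m) e * T = Zp e * (T * Sp e) := by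
  rcases GM.zmod2_cases e with h | h <;> subst h
  · rw [Sp_zero, Zp_zero]; simp
  · rw [Sp_one, Zp_one]; exact sST

lemma tT (b : ZMod 2) : Tp (m := m) b * T = Tp (b + 1) := by rw [Tp_add, Tp_one]
lemma tT' (b : ZMod 2) (y : P) : Tp b * (T * y) = Tp (b + 1) * y := by
  rw [← mul_assoc, tT]

lemma sS (e : ZMod 2) : Sp (m := m) e * S = Sp (e + 1) := by rw [Sp_add, Sp_one]

lemma rR [NeZero m] (c d : ZMod m) : Rp c * Rp d = Rp (c + d) := (Rp_add c d).symm
lemma rR' [NeZero m] (c d : ZMod m) (y : P) : Rp c * (Rp d * y) = Rp (c + d) * y := by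
  rw [← mul_assoc, rR]

lemma sR [NeZero m] (e : ZMod 2) (c : ZMod m) :
    Sp (m := m) e * Rp c = Rp (GM.nu e c) * Sp e := by
  rcases GM.zmod2_cases e with h | h <;> subst h
  · rw [Sp_zero, GM.nu_zero', one_mul, mul_one]
  · rw [Sp_one, GM.nu_one]
    have h := (sSR (m := m)).pow_right c.val
    have h2 : ((R : P)⁻¹) ^ c.val = Rp (-c) := by
      rw [inv_pow]
      have h3 : Rp (m := m) (-c) * Rp c = 1 := by
        rw [rR, neg_add_cancel, Rp_zero]
      exact (eq_inv_of_mul_eq_one_left h3).symm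
    have := h.eq
    rw [h2] at this
    exact this

/-- the normal form map -/
def nf (x : GM m) : P := Zp x.a * (Tp x.b * (Rp x.c * Sp x.e))

lemma nf_one [NeZero m] : nf (m := m) 1 = 1 := by
  simp only [nf, GM.one_a, GM.one_b, GM.one_c, GM.one_e, Zp_zero, Tp_zero, Rp_zero, Sp_zero,
    one_mul, mul_one]

lemma step_z [NeZero m] (x : GM m) : nf x * Z = nf (x * ⟨1, 0, 0, 0⟩) := by
  have hx : x * (⟨1, 0, 0, 0⟩ : GM m) = ⟨x.a + 1, x.b, x.c, x.e⟩ := by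
    ext <;> simp [GM.mul_def, GM.nu_zero]
  rw [hx]
  show Zp x.a * (Tp x.b * (Rp x.c * Sp x.e)) * Z = Zp (x.a + 1) * (Tp x.b * (Rp x.c * Sp x.e))
  rw [mul_assoc, mul_assoc, mul_assoc, zS, zR', zT', zZ']

lemma step_s [NeZero m] (x : GM m) : nf x * S = nf (x * ⟨0, 0, 0, 1⟩) := by
  have hx : x * (⟨0, 0, 0, 1⟩ : GM m) = ⟨x.a, x.b, x.c, x.e + 1⟩ := by
    ext <;> simp [GM.mul_def, GM.nu_zero]
  rw [hx]
  show Zp x.a * (Tp x.b * (Rp x.c * Sp x.e)) * S = Zp x.a * (Tp x.b * (Rp x.c * Sp (x.e + 1)))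
  rw [mul_assoc, mul_assoc, mul_assoc, sS]

lemma step_t [NeZero m] (x : GM m) : nf x * T = nf (x * ⟨0, 1, 0, 0⟩) := by
  have hx : x * (⟨0, 1, 0, 0⟩ : GM m) = ⟨x.a + x.e, x.b + 1, x.c, x.e⟩ := by
    ext <;> simp [GM.mul_def, GM.nu_zero] <;> ring
  rw [hx]
  show Zp x.a * (Tp x.b * (Rp x.c * Sp x.e)) * T
      = Zp (x.a + x.e) * (Tp (x.b + 1) * (Rp x.c * Sp x.e))
  rw [mul_assoc, mul_assoc, mul_assoc, tS, ZpS, ZpT, ZpZ, tR', tT']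

lemma step_r [NeZero m] (hm : 3 ≤ m) (x : GM m) :
    nf x * R = nf (x * ⟨0, 0, 1, 0⟩) := by
  have hx : x * (⟨0, 0, 1, 0⟩ : GM m) = ⟨x.a, x.b, x.c + GM.nu x.e 1, x.e⟩ := by
    ext <;> simp [GM.mul_def]
  rw [hx]
  show Zp x.a * (Tp x.b * (Rp x.c * Sp x.e)) * R
      = Zp x.a * (Tp x.b * (Rp (x.c + GM.nu x.e 1) * Sp x.e))
  rw [mul_assoc, mul_assoc, mul_assoc, ← Rp_one hm, sR, rR']

lemma step_m [NeZero m] (hm : 3 ≤ m) (x : GM m) :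
    nf x * M = nf (x * ⟨0, 0, -1, 1⟩) := by
  have hM : (M : P) = S * R := by
    rw [R, ← mul_assoc, hS2, one_mul]
  have hsm : (⟨0, 0, 0, 1⟩ : GM m) * ⟨0, 0, 1, 0⟩ = ⟨0, 0, -1, 1⟩ := by
    ext <;> simp [GM.mul_def]
  rw [hM, ← mul_assoc, step_s, step_r hm, mul_assoc, hsm]

lemma nf_mul_gen [NeZero m] (hm : 3 ≤ m) (x : GM m) (g : Gen) :
    nf x * PresentedGroup.of g = nf (x * fg g) := by
  cases g
  · exact step_z x
  · exact step_t x
  · exact step_s x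
  · exact step_m hm x

lemma gen_inv (g : Gen) : (PresentedGroup.of g : P)⁻¹ = PresentedGroup.of g := by
  cases g
  · exact Z_inv
  · exact T_inv
  · exact S_inv
  · exact M_inv

lemma nf_mk [NeZero m] (hm : 3 ≤ m) (w : FreeGroup Gen) :
    ∀ x : GM m, ∃ x', nf x' = nf x * PresentedGroup.mk (relsOddPos m) w := by
  induction w using FreeGroup.induction_on with
  | C1 => intro x; exact ⟨x, by simp⟩
  | of g => intro x; exact ⟨x * fg g, (nf_mul_gen hm x g).symm⟩
  | inv_of g _ =>
      intro x
      refine ⟨x * fg g, ?_⟩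
      rw [_root_.map_inv]
      rw [show PresentedGroup.mk (relsOddPos m) (FreeGroup.of g) = PresentedGroup.of g from rfl,
        gen_inv]
      exact (nf_mul_gen hm x g).symm
  | mul u v hu hv =>
      intro x
      obtain ⟨x1, h1⟩ := hu x
      obtain ⟨x2, h2⟩ := hv x1
      exact ⟨x2, by rw [h2, h1, _root_.map_mul, mul_assoc]⟩

lemma nf_surj [NeZero m] (hm : 3 ≤ m) : Function.Surjective (nf : GM m → P) := by
  intro y
  induction y using PresentedGroup.induction_on with
  | _ w =>
      obtain ⟨x', h⟩ := nf_mk hm w 1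
      exact ⟨x', by rwa [nf_one, one_mul] at h⟩

lemma pi_Z : pi m (Z : P) = ⟨1, 0, 0, 0⟩ := PresentedGroup.toGroup.of _
lemma pi_T : pi m (T : P) = ⟨0, 1, 0, 0⟩ := PresentedGroup.toGroup.of _
lemma pi_S : pi m (S : P) = ⟨0, 0, 0, 1⟩ := PresentedGroup.toGroup.of _
lemma pi_M : pi m (M : P) = ⟨0, 0, -1, 1⟩ := PresentedGroup.toGroup.of _

lemma pi_R : pi m (R : P) = ⟨0, 0, 1, 0⟩ := by
  rw [R, _root_.map_mul, pi_S, pi_M]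
  ext <;> simp +decide [GM.mul_def]

lemma pi_nf [NeZero m] (x : GM m) : pi m (nf x) = x := by
  have h1 : ((x.a.val : ℕ) : ZMod 2) = x.a := ZMod.natCast_rightInverse x.a
  have h2 : ((x.b.val : ℕ) : ZMod 2) = x.b := ZMod.natCast_rightInverse x.b
  have h3 : ((x.c.val : ℕ) : ZMod m) = x.c := ZMod.natCast_rightInverse x.c
  have h4 : ((x.e.val : ℕ) : ZMod 2) = x.e := ZMod.natCast_rightInverse x.e
  simp only [nf, Zp, Tp, Rp, Sp, _root_.map_mul, _root_.map_pow, pi_Z, pi_T, pi_S, pi_R,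
    zG_pow, tG_pow, rG_pow, sG_pow, h1, h2, h3, h4]
  ext <;> simp [GM.mul_def, GM.nu_zero]

end NF

end WposOdd

/-- For odd `m ≥ 3`, the positive double covering `Ŵ⁺` of `ℤ₂ × D_{2m}`
has exactly `2m + 3` conjugacy classes. -/
theorem WposOdd_conjClasses (m : ℕ) (hm : 3 ≤ m) (hodd : Odd m) :
    Nat.card (ConjClasses (PresentedGroup (relsOddPos m))) = 2 * m + 3 := by
  haveI : NeZero m := ⟨by omega⟩
  have hnf := WposOdd.nf_surj (m := m) hm
  have hinj : Function.Injective (WposOdd.pi m) := by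
    intro x y h
    obtain ⟨u, rfl⟩ := hnf x
    obtain ⟨v, rfl⟩ := hnf y
    rw [WposOdd.pi_nf, WposOdd.pi_nf] at h
    rw [h]
  have hsurj : Function.Surjective (WposOdd.pi m) :=
    fun y => ⟨WposOdd.nf y, WposOdd.pi_nf y⟩
  let iso := MulEquiv.ofBijective (WposOdd.pi m) ⟨hinj, hsurj⟩
  have hconj : ∀ a b : PresentedGroup (relsOddPos m),
      IsConj a b ↔ IsConj (iso a) (iso b) := by
    intro a b
    constructor
    · exact fun h => iso.toMonoidHom.map_isConj h
    · intro h
      have := iso.symm.toMonoidHom.map_isConj h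
      simpa using this
  have e : ConjClasses (PresentedGroup (relsOddPos m)) ≃ ConjClasses (GM m) :=
    Quotient.congr iso.toEquiv hconj
  rw [Nat.card_congr e, GM.card_conjClasses hodd]
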